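/- Let I ⊂ ℝ contain no two numbers whose difference is a nonzero integer, and suppose 0 ∈ I. If φ_1, φ_2 ∈ PC(𝕋;Γ)^{N×N} are I-regular and have no points of discontinuity in common, then the product φ_1φ_2 is I-regular and wind(φ_1φ_2;I) = wind(φ_1;I) + wind(φ_2;I). -/

import Mathlib

open Complex Filter Set Topology
open scoped Real

noncomputable section

/-- `N × N` complex matrices. -/
abbrev Mat (N : ℕ) := Matrix (Fin N) (Fin N) ℂ

/-- The point `e^{iθ}` on the unit circle. -/
def expi (θ : ℝ) : ℂ := Complex.exp (θ * Complex.I)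

/-- The unit circle `𝕋 ⊆ ℂ`. -/
def circleSet : Set ℂ := Metric.sphere (0 : ℂ) 1

/-- A finite set `Γ = {τ₁, …, τ_R}` of distinct points on the unit circle,
recorded through their arguments `0 ≤ θ₁ < … < θ_R < 2π`. -/
structure JumpData (R : ℕ) where
  θ : Fin R → ℝ
  mono : StrictMono θ
  mem_Ico : ∀ k, θ k ∈ Set.Ico (0 : ℝ) (2 * π)

namespace JumpData
variable {R : ℕ} (D : JumpData R)

/-- The jump point `τ_k = e^{iθ_k}`. -/
def τ (k : Fin R) : ℂ := expi (D.θ k)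

/-- The set `Γ = {τ₁, …, τ_R}`. -/
def Γ : Set ℂ := Set.range D.τ

/-- The angle of the next jump point, `θ_{k+1}`, with the convention
`θ_{R+1} = θ₁ + 2π`. -/
def nextθ (k : Fin R) : ℝ :=
  if h : (k : ℕ) + 1 < R then D.θ ⟨(k : ℕ) + 1, h⟩ else D.θ ⟨0, k.pos⟩ + 2 * π

end JumpData

/-- `φ(τ+0) = L`:  one-sided limit from the "plus" side (counterclockwise). -/
def limPS (f : ℂ → ℂ) (τ L : ℂ) : Prop :=
  Tendsto (fun θ : ℝ => f (τ * expi θ)) (nhdsWithin 0 (Set.Ioi 0)) (nhds L)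

/-- `φ(τ-0) = L`:  one-sided limit from the "minus" side. -/
def limMS (f : ℂ → ℂ) (τ L : ℂ) : Prop :=
  Tendsto (fun θ : ℝ => f (τ * expi (-θ))) (nhdsWithin 0 (Set.Ioi 0)) (nhds L)

/-- One-sided limit `φ(τ+0) = P` for a matrix function, entrywise. -/
def limP {N : ℕ} (φ : ℂ → Mat N) (τ : ℂ) (P : Mat N) : Prop :=
  ∀ i i', limPS (fun z => φ z i i') τ (P i i')

/-- One-sided limit `φ(τ-0) = M` for a matrix function, entrywise. -/
def limM {N : ℕ} (φ : ℂ → Mat N) (τ : ℂ) (M : Mat N) : Prop :=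
  ∀ i i', limMS (fun z => φ z i i') τ (M i i')

/-- The scalar class `PC(𝕋;Γ)`: continuous on `𝕋 ∖ Γ` with finite one-sided limits
at each point of `Γ`. -/
def IsPCS (Γ : Set ℂ) (f : ℂ → ℂ) : Prop :=
  ContinuousOn f (circleSet \ Γ) ∧
  ∀ τ ∈ Γ, (∃ L, limPS f τ L) ∧ (∃ L, limMS f τ L)

/-- The scalar class `PC^{1+ε}(𝕋;Γ)`: piecewise continuous, continuously
differentiable off `Γ`, with a derivative which is Hölder continuous of order `ε`
on each open arc avoiding `Γ`. -/
def IsPCHS (ε : ℝ) (Γ : Set ℂ) (f : ℂ → ℂ) : Prop :=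
  IsPCS Γ f ∧
  ∃ C : ℝ, ∀ x y : ℝ, x < y → y ≤ x + 2 * π → (∀ θ ∈ Set.Ioo x y, expi θ ∉ Γ) →
    ∃ g : ℝ → ℂ,
      (∀ θ ∈ Set.Ioo x y, HasDerivAt (fun s : ℝ => f (expi s)) (g θ) θ) ∧
      ∀ θ₁ ∈ Set.Ioo x y, ∀ θ₂ ∈ Set.Ioo x y, ‖g θ₁ - g θ₂‖ ≤ C * |θ₁ - θ₂| ^ ε

/-- The scalar class `C^{1+ε}_pw(𝕋;Γ) = PC^{1+ε}(𝕋;Γ) ∩ C(𝕋)`. -/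
def IsCpwS (ε : ℝ) (Γ : Set ℂ) (f : ℂ → ℂ) : Prop :=
  IsPCHS ε Γ f ∧ ContinuousOn f circleSet

/-- `PC(𝕋;Γ)^{N×N}`: all entries belong to `PC(𝕋;Γ)`. -/
def IsPCmat {N : ℕ} (Γ : Set ℂ) (φ : ℂ → Mat N) : Prop :=
  ∀ i i', IsPCS Γ (fun z => φ z i i')

/-- `PC^{1+ε}(𝕋;Γ)^{N×N}`: all entries belong to `PC^{1+ε}(𝕋;Γ)`. -/
def IsPCHmat {N : ℕ} (ε : ℝ) (Γ : Set ℂ) (φ : ℂ → Mat N) : Prop :=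
  ∀ i i', IsPCHS ε Γ (fun z => φ z i i')

/-- `C^{1+ε}_pw(𝕋;Γ)^{N×N}`: all entries belong to `C^{1+ε}_pw(𝕋;Γ)`. -/
def IsCpwMat {N : ℕ} (ε : ℝ) (Γ : Set ℂ) (φ : ℂ → Mat N) : Prop :=
  ∀ i i', IsCpwS ε Γ (fun z => φ z i i')

/-- `L` is the matrix logarithm `(1/2πi) log (φ(τ+0)⁻¹ φ(τ-0))` whose eigenvalues
have real parts in `I`; this includes the requirement that the one-sided limits
exist and are invertible. -/
def IsJumpLog {N : ℕ} (I : Set ℝ) (φ : ℂ → Mat N) (τ : ℂ) (L : Mat N) : Prop :=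
  ∃ P M : Mat N, limP φ τ P ∧ limM φ τ M ∧ IsUnit P ∧ IsUnit M ∧
    NormedSpace.exp ((2 * (π : ℂ) * Complex.I) • L) = P⁻¹ * M ∧
    ∀ μ ∈ spectrum ℂ L, μ.re ∈ I

/-- `φ` is `I`-regular. -/
def IsIRegular {N R : ℕ} (I : Set ℝ) (D : JumpData R) (φ : ℂ → Mat N) : Prop :=
  (∀ z ∈ circleSet \ D.Γ, IsUnit (φ z)) ∧
  ∀ k : Fin R, ∃ L : Mat N, IsJumpLog I φ (D.τ k) L

/-- `δ` is the increment of a continuous branch of `log f` along the open arc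
`{e^{iθ} : x < θ < y}`. -/
def ArcLogIncr (f : ℂ → ℂ) (x y : ℝ) (δ : ℂ) : Prop :=
  ∃ h : ℝ → ℂ, ContinuousOn h (Set.Ioo x y) ∧
    (∀ θ ∈ Set.Ioo x y, f (expi θ) = Complex.exp (h θ)) ∧
    ∃ hx hy : ℂ,
      Tendsto h (nhdsWithin x (Set.Ioi x)) (nhds hx) ∧
      Tendsto h (nhdsWithin y (Set.Iio y)) (nhds hy) ∧ δ = hy - hx

/-- `w` is the winding number of the (continuous, nonvanishing) function on the circle
agreeing with `f` off the finite set `Γ`. -/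
def IsWindingNumberOff (Γ : Set ℂ) (f : ℂ → ℂ) (w : ℤ) : Prop :=
  ∃ h : ℝ → ℂ, ContinuousOn h (Set.Icc 0 (2 * π)) ∧
    (∀ θ ∈ Set.Icc (0:ℝ) (2 * π), expi θ ∉ Γ → f (expi θ) = Complex.exp (h θ)) ∧
    (w : ℂ) = (h (2 * π) - h 0) / (2 * (π : ℂ) * Complex.I)

/-- `w` is the usual winding number of the continuous nonvanishing function `f` on `𝕋`. -/
def IsWindingNumber (f : ℂ → ℂ) (w : ℤ) : Prop := IsWindingNumberOff ∅ f w

/-- `w = wind(φ; I)` is the `I`-winding number of the `I`-regular function `φ`. -/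
def IsIWindNum {N R : ℕ} (I : Set ℝ) (D : JumpData R) (φ : ℂ → Mat N) (w : ℤ) : Prop :=
  if R = 0 then IsWindingNumber (fun z => (φ z).det) w
  else ∃ (L : Fin R → Mat N) (δ : Fin R → ℂ),
    (∀ k, IsJumpLog I φ (D.τ k) (L k)) ∧
    (∀ k, ArcLogIncr (fun z => (φ z).det) (D.θ k) (D.nextθ k) (δ k)) ∧
    (w : ℂ) = -(∑ k, (L k).trace) + (1 / (2 * (π : ℂ) * Complex.I)) * ∑ k, δ k

/-- The scalar function `u_{β,τ}(t) = exp(iβ arg(-t/τ))`, `|arg| < π`. -/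
def uScalar (β τ z : ℂ) : ℂ := Complex.exp (Complex.I * β * ((-z / τ).arg : ℝ))

/-- The matrix function `u_{B,τ}(t) = exp(iB arg(-t/τ))`, `|arg| < π`. -/
def uMat {N : ℕ} (B : Mat N) (τ : ℂ) (z : ℂ) : Mat N :=
  NormedSpace.exp ((Complex.I * ((-z / τ).arg : ℝ)) • B)

/-- `n`-th Fourier coefficient of a scalar symbol. -/
def fourierCoefS (f : ℂ → ℂ) (n : ℤ) : ℂ :=
  (1 / (2 * (π : ℂ))) * ∫ θ in (0:ℝ)..(2 * π), f (expi θ) * Complex.exp (-(n : ℂ) * θ * Complex.I)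

/-- `n`-th (matrix) Fourier coefficient of a matrix symbol, computed entrywise. -/
def fourierCoefM {N : ℕ} (a : ℂ → Mat N) (n : ℤ) : Mat N :=
  Matrix.of fun i i' => fourierCoefS (fun z => a z i i') n

/-- The finite `nN × nN` block Toeplitz matrix `T_n(a) = (a_{j-k})_{j,k=0}^{n-1}`. -/
def toeplitzMat {N : ℕ} (a : ℂ → Mat N) (n : ℕ) :
    Matrix (Fin n × Fin N) (Fin n × Fin N) ℂ :=
  Matrix.of fun p q => fourierCoefM a ((p.1 : ℤ) - (q.1 : ℤ)) p.2 q.2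

/-- The flipped symbol `ã(e^{iθ}) = a(e^{-iθ})`; on the circle, `z ↦ a z⁻¹`. -/
def tilde {α : Type*} (a : ℂ → α) : ℂ → α := fun z => a z⁻¹

/-- The Hilbert space `ℓ²(ℤ₊)^N`. -/
abbrev Hsp (N : ℕ) := lp (fun _ : ℕ => EuclideanSpace ℂ (Fin N)) 2

/-- The standard orthonormal basis vector of `ℓ²(ℤ₊)^N` with index `(k, i)`. -/
def basVec (N : ℕ) (p : ℕ × Fin N) : Hsp N := lp.single 2 p.1 (EuclideanSpace.single p.2 1)

/-- The `((j,i),(k,i'))` matrix entry of an operator on `ℓ²(ℤ₊)^N`. -/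
def opEntry {N : ℕ} (A : Hsp N →L[ℂ] Hsp N) (j k : ℕ) (i i' : Fin N) : ℂ :=
  (A (basVec N (k, i'))) j i

/-- `A` is the (block) Toeplitz operator `T(a) = (a_{j-k})_{j,k≥0}` on `ℓ²(ℤ₊)^N`. -/
def IsToeplitzOp {N : ℕ} (a : ℂ → Mat N) (A : Hsp N →L[ℂ] Hsp N) : Prop :=
  ∀ j k : ℕ, ∀ i i' : Fin N, opEntry A j k i i' = fourierCoefM a ((j : ℤ) - (k : ℤ)) i i'

/-- `A` is the (block) Hankel operator `H(a) = (a_{j+k+1})_{j,k≥0}` on `ℓ²(ℤ₊)^N`. -/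
def IsHankelOp {N : ℕ} (a : ℂ → Mat N) (A : Hsp N →L[ℂ] Hsp N) : Prop :=
  ∀ j k : ℕ, ∀ i i' : Fin N, opEntry A j k i i' = fourierCoefM a ((j : ℤ) + (k : ℤ) + 1) i i'

/-- `A` is Fredholm: closed range and finite dimensional kernel and cokernel. -/
def IsFredholm {N : ℕ} (A : Hsp N →L[ℂ] Hsp N) : Prop :=
  IsClosed (LinearMap.range (A : Hsp N →ₗ[ℂ] Hsp N) : Set (Hsp N)) ∧
  FiniteDimensional ℂ (LinearMap.ker (A : Hsp N →ₗ[ℂ] Hsp N)) ∧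
  FiniteDimensional ℂ (Hsp N ⧸ LinearMap.range (A : Hsp N →ₗ[ℂ] Hsp N))

/-- The Fredholm index `ind A = dim ker A - dim coker A`. -/
def fredholmIndex {N : ℕ} (A : Hsp N →L[ℂ] Hsp N) : ℤ :=
  (Module.finrank ℂ (LinearMap.ker (A : Hsp N →ₗ[ℂ] Hsp N)) : ℤ) - Module.finrank ℂ (Hsp N ⧸ LinearMap.range (A : Hsp N →ₗ[ℂ] Hsp N))

/-- Membership in `L^∞(𝕋)^{N×N}` (via a bounded measurable representative). -/
def IsLinf {N : ℕ} (a : ℂ → Mat N) : Prop :=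
  (∀ i i', Measurable fun θ : ℝ => a (expi θ) i i') ∧
  ∃ C : ℝ, ∀ z ∈ circleSet, ∀ i i', ‖a z i i'‖ ≤ C

/-- Hilbert-Schmidt operator on `ℓ²(ℤ₊)^N`. -/
def IsHS {N : ℕ} (A : Hsp N →L[ℂ] Hsp N) : Prop :=
  Summable fun p : ℕ × Fin N => ‖A (basVec N p)‖ ^ 2

/-- Trace class operator on `ℓ²(ℤ₊)^N`: a finite sum of products of pairs of
Hilbert-Schmidt operators. -/
def IsTraceClass {N : ℕ} (A : Hsp N →L[ℂ] Hsp N) : Prop :=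
  ∃ (m : ℕ) (B C : Fin m → (Hsp N →L[ℂ] Hsp N)),
    (∀ i, IsHS (B i)) ∧ (∀ i, IsHS (C i)) ∧ A = ∑ i, B i * C i

/-- The trace norm `‖A‖₁`, expressed as the supremum of `|Σ ⟨A f_k, g_k⟩|` over
finite orthonormal families `(f_k)`, `(g_k)`. -/
def traceNorm {N : ℕ} (A : Hsp N →L[ℂ] Hsp N) : ℝ :=
  sSup {r : ℝ | ∃ (m : ℕ) (f g : Fin m → Hsp N), Orthonormal ℂ f ∧ Orthonormal ℂ g ∧
    r = ‖∑ k, @inner ℂ _ _ (A (f k)) (g k)‖}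

/-- The finite `nN × nN` matrices act on `ℓ²(ℤ₊)^N` (supported on the first `n`
vector coordinates). -/
def embedMat {N : ℕ} (n : ℕ) (M : Matrix (Fin n × Fin N) (Fin n × Fin N) ℂ) :
    Hsp N →L[ℂ] Hsp N :=
  ∑ p : Fin n × Fin N, ∑ q : Fin n × Fin N,
    M p q • ((innerSL ℂ (basVec N ((q.1 : ℕ), q.2))).smulRight (basVec N ((p.1 : ℕ), p.2)))

/-- The sequence of finite sections `T_n(a)` is stable: the matrices are eventually
invertible with uniformly bounded inverses (in the `ℓ²` operator norm). -/
def IsStableSeq {N : ℕ} (a : ℂ → Mat N) : Prop :=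
  ∃ (n₀ : ℕ) (C : ℝ), ∀ n : ℕ, n₀ ≤ n → IsUnit (toeplitzMat a n) ∧
    ‖Matrix.toEuclideanCLM (𝕜 := ℂ) ((toeplitzMat a n)⁻¹)‖ ≤ C

/-- The Barnes G-function, via its canonical product. -/
def BarnesG (w : ℂ) : ℂ :=
  (2 * (π : ℂ)) ^ ((w - 1) / 2) *
    Complex.exp (-(w) * (w - 1) / 2 - (Real.eulerMascheroniConstant : ℂ) * (w - 1) ^ 2 / 2) *
    ∏' k : ℕ, ((1 + (w - 1) / (k + 1)) ^ ((k : ℕ) + 1) *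
      Complex.exp (-(w - 1) + (w - 1) ^ 2 / (2 * ((k : ℕ) + 1))))

/-- The geometric mean `G[f] = exp((1/2π) ∫ log f)`, where `log f` is a continuous
branch of the logarithm of the continuous extension of `f` off `Γ`. -/
def IsGeoMean (Γ : Set ℂ) (f : ℂ → ℂ) (G : ℂ) : Prop :=
  ∃ h : ℝ → ℂ, ContinuousOn h (Set.Icc 0 (2 * π)) ∧
    (∀ θ ∈ Set.Icc (0:ℝ) (2 * π), expi θ ∉ Γ → f (expi θ) = Complex.exp (h θ)) ∧
    G = Complex.exp ((1 / (2 * (π : ℂ))) * ∫ θ in (0:ℝ)..(2 * π), h θ)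

section Aux

lemma norm_expi (θ : ℝ) : ‖expi θ‖ = 1 := by
  unfold expi
  rw [Complex.norm_exp]
  simp

lemma abs_expi (θ : ℝ) : ‖expi θ‖ = 1 := by
  unfold expi
  rw [Complex.norm_exp]
  simp

lemma expi_mem_circle (θ : ℝ) : expi θ ∈ circleSet := by
  simp [circleSet, mem_sphere_zero_iff_norm, norm_expi, abs_expi]

lemma continuous_expi : Continuous expi :=
  Complex.continuous_exp.comp (Complex.continuous_ofReal.mul continuous_const)

lemma limPS_of_cwa {f : ℂ → ℂ} {τ : ℂ} (hτ : τ ∈ circleSet)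
    (h : ContinuousWithinAt f circleSet τ) : limPS f τ (f τ) := by
  have hτn : ‖τ‖ = 1 := mem_sphere_zero_iff_norm.mp hτ
  have hmap : Tendsto (fun θ : ℝ => τ * expi θ) (nhdsWithin 0 (Set.Ioi 0))
      (nhdsWithin τ circleSet) := by
    apply tendsto_nhdsWithin_of_tendsto_nhds_of_eventually_within
    · have hco : Continuous fun θ : ℝ => τ * expi θ := continuous_const.mul continuous_expi
      have h0 : τ * expi 0 = τ := by simp [expi]
      have h2 : Tendsto (fun θ : ℝ => τ * expi θ) (nhdsWithin 0 (Set.Ioi 0))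
          (nhds (τ * expi 0)) := (hco.tendsto 0).mono_left nhdsWithin_le_nhds
      rwa [h0] at h2
    · exact Filter.Eventually.of_forall fun θ => by
        simp [circleSet, mem_sphere_zero_iff_norm, norm_mul, norm_expi, abs_expi, hτn,
          map_mul]
  exact h.tendsto.comp hmap

lemma limMS_of_cwa {f : ℂ → ℂ} {τ : ℂ} (hτ : τ ∈ circleSet)
    (h : ContinuousWithinAt f circleSet τ) : limMS f τ (f τ) := by
  have hτn : ‖τ‖ = 1 := mem_sphere_zero_iff_norm.mp hτ
  have hmap : Tendsto (fun θ : ℝ => τ * expi (-θ)) (nhdsWithin 0 (Set.Ioi 0))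
      (nhdsWithin τ circleSet) := by
    apply tendsto_nhdsWithin_of_tendsto_nhds_of_eventually_within
    · have hco : Continuous fun θ : ℝ => τ * expi (-θ) :=
        continuous_const.mul (continuous_expi.comp continuous_neg)
      have h0 : τ * expi (-0) = τ := by simp [expi]
      have h2 : Tendsto (fun θ : ℝ => τ * expi (-θ)) (nhdsWithin 0 (Set.Ioi 0))
          (nhds (τ * expi (-0))) := (hco.tendsto 0).mono_left nhdsWithin_le_nhds
      rwa [h0] at h2
    · exact Filter.Eventually.of_forall fun θ => by
        simp [circleSet, mem_sphere_zero_iff_norm, norm_mul, norm_expi, abs_expi, hτn,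
          map_mul]
  exact h.tendsto.comp hmap

lemma limPS_unique {f : ℂ → ℂ} {τ L L' : ℂ} (h : limPS f τ L) (h' : limPS f τ L') : L = L' :=
  tendsto_nhds_unique h h'

lemma limMS_unique {f : ℂ → ℂ} {τ L L' : ℂ} (h : limMS f τ L) (h' : limMS f τ L') : L = L' :=
  tendsto_nhds_unique h h'

lemma cwa_limP {N : ℕ} {φ : ℂ → Mat N} {τ : ℂ} (hτ : τ ∈ circleSet)
    (hc : ∀ i i', ContinuousWithinAt (fun z => φ z i i') circleSet τ) : limP φ τ (φ τ) :=
  fun i i' => limPS_of_cwa hτ (hc i i')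

lemma cwa_limM {N : ℕ} {φ : ℂ → Mat N} {τ : ℂ} (hτ : τ ∈ circleSet)
    (hc : ∀ i i', ContinuousWithinAt (fun z => φ z i i') circleSet τ) : limM φ τ (φ τ) :=
  fun i i' => limMS_of_cwa hτ (hc i i')

lemma limP_unique {N : ℕ} {φ : ℂ → Mat N} {τ : ℂ} {P P' : Mat N}
    (h : limP φ τ P) (h' : limP φ τ P') : P = P' :=
  Matrix.ext fun i i' => limPS_unique (h i i') (h' i i')

lemma limM_unique {N : ℕ} {φ : ℂ → Mat N} {τ : ℂ} {M M' : Mat N}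
    (h : limM φ τ M) (h' : limM φ τ M') : M = M' :=
  Matrix.ext fun i i' => limMS_unique (h i i') (h' i i')

lemma limP_mul {N : ℕ} {φ₁ φ₂ : ℂ → Mat N} {τ : ℂ} {P₁ P₂ : Mat N}
    (h₁ : limP φ₁ τ P₁) (h₂ : limP φ₂ τ P₂) :
    limP (fun z => φ₁ z * φ₂ z) τ (P₁ * P₂) := by
  intro i i'
  simp only [limPS, Matrix.mul_apply]
  exact tendsto_finset_sum _ fun j _ => (h₁ i j).mul (h₂ j i')

lemma limM_mul {N : ℕ} {φ₁ φ₂ : ℂ → Mat N} {τ : ℂ} {M₁ M₂ : Mat N}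
    (h₁ : limM φ₁ τ M₁) (h₂ : limM φ₂ τ M₂) :
    limM (fun z => φ₁ z * φ₂ z) τ (M₁ * M₂) := by
  intro i i'
  simp only [limMS, Matrix.mul_apply]
  exact tendsto_finset_sum _ fun j _ => (h₁ i j).mul (h₂ j i')

lemma eval_charpoly' {N : ℕ} (L : Mat N) (μ : ℂ) :
    L.charpoly.eval μ = (algebraMap ℂ (Mat N) μ - L).det := by
  rw [Matrix.charpoly, eval_det, Matrix.matPolyEquiv_charmatrix]
  congr 1
  simp only [Polynomial.eval_sub, Polynomial.eval_X, Polynomial.eval_C]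
  ext i j
  simp [Matrix.scalar_apply, Matrix.algebraMap_matrix_apply, Matrix.diagonal_apply,
    Matrix.sub_apply]

lemma root_mem_spectrum {N : ℕ} (L : Mat N) (μ : ℂ)
    (h : μ ∈ L.charpoly.roots) : μ ∈ spectrum ℂ L := by
  rw [Polynomial.mem_roots (Matrix.charpoly_monic L).ne_zero] at h
  rw [spectrum.mem_iff]
  intro hu
  rw [Matrix.isUnit_iff_isUnit_det] at hu
  rw [← eval_charpoly'] at hu
  rw [show Polynomial.eval μ L.charpoly = 0 from h] at hu
  exact hu.ne_zero rfl

lemma twoPiI_ne_zero : (2 * (π : ℂ) * Complex.I) ≠ 0 := by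
  simp [Real.pi_ne_zero, Complex.I_ne_zero, Complex.ofReal_ne_zero]

lemma trace_eq_zero_of_spec {N : ℕ} {I : Set ℝ}
    (hI : ∀ x ∈ I, ∀ y ∈ I, ∀ m : ℤ, x - y = (m : ℝ) → m = 0) (h0 : (0:ℝ) ∈ I)
    {L : Mat N} (hexp : NormedSpace.exp ((2 * (π : ℂ) * Complex.I) • L) = 1)
    (hspec : ∀ μ ∈ spectrum ℂ L, μ.re ∈ I) : L.trace = 0 := by
  have hzero : ∀ μ ∈ spectrum ℂ L, μ = 0 := by
    intro μ hμ
    have hnt : Nontrivial (Mat N) := by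
      rcases subsingleton_or_nontrivial (Mat N) with hs | hn
      · exact absurd hμ (by simp [spectrum.mem_iff, isUnit_of_subsingleton])
      · exact hn
    letI : SeminormedRing (Mat N) := Matrix.linftyOpSemiNormedRing
    letI : NormedRing (Mat N) := Matrix.linftyOpNormedRing
    letI : NormedAlgebra ℂ (Mat N) := Matrix.linftyOpNormedAlgebra
    have hμ' : (2 * (π : ℂ) * Complex.I) * μ ∈
        spectrum ℂ ((2 * (π : ℂ) * Complex.I) • L) := by
      have h1 := spectrum.unit_smul_eq_smul (R := ℂ) L (Units.mk0 _ twoPiI_ne_zero)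
      rw [Units.smul_mk0] at h1
      rw [h1]
      refine ⟨μ, hμ, ?_⟩
      simp [Units.smul_def]
    have hmem := spectrum.exp_mem_exp ((2 * (π : ℂ) * Complex.I) • L) hμ'
    replace hmem : NormedSpace.exp ((2 * (π : ℂ) * Complex.I) * μ) ∈ spectrum ℂ (1 : Mat N) := by
      rw [← hexp]
      convert hmem using 2 <;> rfl
    rw [spectrum.one_eq] at hmem
    have hone : Complex.exp ((2 * (π : ℂ) * Complex.I) * μ) = 1 := by
      rw [Complex.exp_eq_exp_ℂ]
      exact hmem
    rw [Complex.exp_eq_one_iff] at hone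
    obtain ⟨n, hn⟩ := hone
    have hμn : μ = (n : ℂ) := by
      have : (2 * (π : ℂ) * Complex.I) * μ = (2 * (π : ℂ) * Complex.I) * (n : ℂ) := by
        rw [hn]; ring
      exact mul_left_cancel₀ twoPiI_ne_zero this
    have hre : μ.re = (n : ℝ) := by rw [hμn]; simp
    have hn0 : n = 0 := hI μ.re (hspec μ hμ) 0 h0 n (by rw [hre]; ring)
    rw [hμn, hn0]; simp
  rw [Matrix.trace_eq_sum_roots_charpoly]
  exact Multiset.sum_eq_zero fun r hr => hzero r (root_mem_spectrum L r hr)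

lemma IsJumpLog.mul_left {N : ℕ} {I : Set ℝ} {φ₁ φ₂ : ℂ → Mat N} {τ : ℂ} {L₁ L₂ : Mat N}
    (hτ : τ ∈ circleSet)
    (hc : ∀ i i', ContinuousWithinAt (fun z => φ₁ z i i') circleSet τ)
    (h₁ : IsJumpLog I φ₁ τ L₁) (h₂ : IsJumpLog I φ₂ τ L₂) :
    IsJumpLog I (fun z => φ₁ z * φ₂ z) τ L₂ := by
  obtain ⟨P₁, M₁, hP₁, hM₁, hPu₁, hMu₁, hexp₁, hs₁⟩ := h₁
  obtain ⟨P₂, M₂, hP₂, hM₂, hPu₂, hMu₂, hexp₂, hs₂⟩ := h₂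
  have hCP : P₁ = φ₁ τ := limP_unique hP₁ (cwa_limP hτ hc)
  have hCM : M₁ = φ₁ τ := limM_unique hM₁ (cwa_limM hτ hc)
  have hCu : IsUnit (φ₁ τ) := hCP ▸ hPu₁
  have hCdet : IsUnit (φ₁ τ).det := (Matrix.isUnit_iff_isUnit_det _).mp hCu
  refine ⟨φ₁ τ * P₂, φ₁ τ * M₂, limP_mul (hCP ▸ hP₁) hP₂, limM_mul (hCM ▸ hM₁) hM₂,
    hCu.mul hPu₂, hCu.mul hMu₂, ?_, hs₂⟩
  rw [hexp₂, Matrix.mul_inv_rev, mul_assoc, ← mul_assoc (φ₁ τ)⁻¹,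
    Matrix.nonsing_inv_mul _ hCdet, one_mul]

lemma IsJumpLog.mul_right {N : ℕ} {I : Set ℝ} {φ₁ φ₂ : ℂ → Mat N} {τ : ℂ} {L₁ L₂ : Mat N}
    (hτ : τ ∈ circleSet)
    (hc : ∀ i i', ContinuousWithinAt (fun z => φ₂ z i i') circleSet τ)
    (h₁ : IsJumpLog I φ₁ τ L₁) (h₂ : IsJumpLog I φ₂ τ L₂) :
    IsJumpLog I (fun z => φ₁ z * φ₂ z) τ ((φ₂ τ)⁻¹ * L₁ * φ₂ τ) := by
  obtain ⟨P₁, M₁, hP₁, hM₁, hPu₁, hMu₁, hexp₁, hs₁⟩ := h₁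
  obtain ⟨P₂, M₂, hP₂, hM₂, hPu₂, hMu₂, hexp₂, hs₂⟩ := h₂
  have hCP : P₂ = φ₂ τ := limP_unique hP₂ (cwa_limP hτ hc)
  have hCM : M₂ = φ₂ τ := limM_unique hM₂ (cwa_limM hτ hc)
  have hCu : IsUnit (φ₂ τ) := hCP ▸ hPu₂
  refine ⟨P₁ * φ₂ τ, M₁ * φ₂ τ, limP_mul hP₁ (hCP ▸ hP₂), limM_mul hM₁ (hCM ▸ hM₂),
    hPu₁.mul hCu, hMu₁.mul hCu, ?_, ?_⟩
  · have h1 : (2 * (π : ℂ) * Complex.I) • ((φ₂ τ)⁻¹ * L₁ * φ₂ τ)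
        = (φ₂ τ)⁻¹ * ((2 * (π : ℂ) * Complex.I) • L₁) * φ₂ τ := by
      simp [smul_mul_assoc, mul_smul_comm]
    rw [h1, Matrix.exp_conj' (φ₂ τ) _ hCu, hexp₁, Matrix.mul_inv_rev]
    simp [mul_assoc]
  · obtain ⟨u, hu⟩ := hCu
    intro μ hμ
    apply hs₁
    rw [← hu, ← Matrix.coe_units_inv, spectrum.units_conjugate'] at hμ
    exact hμ

lemma ArcLogIncr.mul {f g : ℂ → ℂ} {x y : ℝ} {δ₁ δ₂ : ℂ}
    (hf : ArcLogIncr f x y δ₁) (hg : ArcLogIncr g x y δ₂) :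
    ArcLogIncr (fun z => f z * g z) x y (δ₁ + δ₂) := by
  obtain ⟨h₁, hc₁, he₁, a₁, b₁, ha₁, hb₁, hδ₁⟩ := hf
  obtain ⟨h₂, hc₂, he₂, a₂, b₂, ha₂, hb₂, hδ₂⟩ := hg
  refine ⟨h₁ + h₂, hc₁.add hc₂, fun θ hθ => ?_, a₁ + a₂, b₁ + b₂,
    ha₁.add ha₂, hb₁.add hb₂, by rw [hδ₁, hδ₂]; ring⟩
  simp [he₁ θ hθ, he₂ θ hθ, Complex.exp_add]

lemma IsWindingNumberOff.mul {Γ : Set ℂ} {f g : ℂ → ℂ} {w₁ w₂ : ℤ}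
    (hf : IsWindingNumberOff Γ f w₁) (hg : IsWindingNumberOff Γ g w₂) :
    IsWindingNumberOff Γ (fun z => f z * g z) (w₁ + w₂) := by
  obtain ⟨h₁, hc₁, he₁, hw₁⟩ := hf
  obtain ⟨h₂, hc₂, he₂, hw₂⟩ := hg
  refine ⟨h₁ + h₂, hc₁.add hc₂, fun θ hθ hθ' => ?_, ?_⟩
  · simp [he₁ θ hθ hθ', he₂ θ hθ hθ', Complex.exp_add]
  · push_cast
    rw [hw₁, hw₂]
    simp only [Pi.add_apply]
    ring

end Aux

/-- Proposition `p1.1`(iii): if `0 ∈ I` and `φ₁, φ₂ ∈ PC(𝕋;Γ)^{N×N}`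
are `I`-regular with no common discontinuities, then `φ₁ φ₂` is `I`-regular and
`wind(φ₁φ₂; I) = wind(φ₁; I) + wind(φ₂; I)`. -/
theorem statement4 {N R : ℕ} (I : Set ℝ)
    (hI : ∀ x ∈ I, ∀ y ∈ I, ∀ m : ℤ, x - y = (m : ℝ) → m = 0)
    (h0 : (0:ℝ) ∈ I)
    (D : JumpData R) (φ₁ φ₂ : ℂ → Mat N)
    (hφ₁ : IsPCmat D.Γ φ₁) (hφ₂ : IsPCmat D.Γ φ₂)
    (hreg₁ : IsIRegular I D φ₁) (hreg₂ : IsIRegular I D φ₂)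
    (hdisj : ∀ k : Fin R,
      (∀ i i', ContinuousWithinAt (fun z => φ₁ z i i') circleSet (D.τ k)) ∨
      (∀ i i', ContinuousWithinAt (fun z => φ₂ z i i') circleSet (D.τ k))) :
    IsIRegular I D (fun z => φ₁ z * φ₂ z) ∧
    ∀ w₁ w₂ : ℤ, IsIWindNum I D φ₁ w₁ → IsIWindNum I D φ₂ w₂ →
      IsIWindNum I D (fun z => φ₁ z * φ₂ z) (w₁ + w₂) := by
  have hτmem : ∀ k : Fin R, D.τ k ∈ circleSet := fun k => expi_mem_circle _
  have hjump : ∀ k : Fin R, ∀ L₁ L₂ : Mat N,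
      IsJumpLog I φ₁ (D.τ k) L₁ → IsJumpLog I φ₂ (D.τ k) L₂ →
      ∃ L : Mat N, IsJumpLog I (fun z => φ₁ z * φ₂ z) (D.τ k) L ∧
        L.trace = L₁.trace + L₂.trace := by
    intro k L₁ L₂ h₁ h₂
    rcases hdisj k with hc | hc
    · refine ⟨L₂, IsJumpLog.mul_left (hτmem k) hc h₁ h₂, ?_⟩
      have ht : L₁.trace = 0 := by
        obtain ⟨P, M, hP, hM, hPu, hMu, hexp, hs⟩ := h₁
        have hP' : P = φ₁ (D.τ k) := limP_unique hP (cwa_limP (hτmem k) hc)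
        have hM' : M = φ₁ (D.τ k) := limM_unique hM (cwa_limM (hτmem k) hc)
        have hdet : IsUnit P.det := (Matrix.isUnit_iff_isUnit_det P).mp hPu
        have h1 : NormedSpace.exp ((2 * (π : ℂ) * Complex.I) • L₁) = 1 := by
          rw [hexp, hM'.trans hP'.symm]
          exact Matrix.nonsing_inv_mul P hdet
        exact trace_eq_zero_of_spec hI h0 h1 hs
      rw [ht, zero_add]
    · refine ⟨(φ₂ (D.τ k))⁻¹ * L₁ * φ₂ (D.τ k),
        IsJumpLog.mul_right (hτmem k) hc h₁ h₂, ?_⟩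
      have ht : L₂.trace = 0 := by
        obtain ⟨P, M, hP, hM, hPu, hMu, hexp, hs⟩ := h₂
        have hP' : P = φ₂ (D.τ k) := limP_unique hP (cwa_limP (hτmem k) hc)
        have hM' : M = φ₂ (D.τ k) := limM_unique hM (cwa_limM (hτmem k) hc)
        have hdet : IsUnit P.det := (Matrix.isUnit_iff_isUnit_det P).mp hPu
        have h1 : NormedSpace.exp ((2 * (π : ℂ) * Complex.I) • L₂) = 1 := by
          rw [hexp, hM'.trans hP'.symm]
          exact Matrix.nonsing_inv_mul P hdet
        exact trace_eq_zero_of_spec hI h0 h1 hs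
      have hCu : IsUnit (φ₂ (D.τ k)) := by
        obtain ⟨P, M, hP, hM, hPu, hMu, hexp, hs⟩ := h₂
        have hP' : P = φ₂ (D.τ k) := limP_unique hP (cwa_limP (hτmem k) hc)
        exact hP' ▸ hPu
      have hCdet : IsUnit (φ₂ (D.τ k)).det := (Matrix.isUnit_iff_isUnit_det _).mp hCu
      rw [ht, add_zero, Matrix.trace_mul_comm, ← mul_assoc,
        Matrix.mul_nonsing_inv _ hCdet, one_mul]
  refine ⟨⟨fun z hz => (hreg₁.1 z hz).mul (hreg₂.1 z hz), fun k => ?_⟩, ?_⟩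
  · obtain ⟨L₁, h₁⟩ := hreg₁.2 k
    obtain ⟨L₂, h₂⟩ := hreg₂.2 k
    obtain ⟨L, hL, -⟩ := hjump k L₁ L₂ h₁ h₂
    exact ⟨L, hL⟩
  · intro w₁ w₂ hw₁ hw₂
    unfold IsIWindNum at hw₁ hw₂ ⊢
    by_cases hR : R = 0
    · rw [if_pos hR] at hw₁ hw₂ ⊢
      have := IsWindingNumberOff.mul hw₁ hw₂
      simpa [IsWindingNumber, Matrix.det_mul] using this
    · rw [if_neg hR] at hw₁ hw₂ ⊢
      obtain ⟨L₁, δ₁, hL₁, hδ₁, he₁⟩ := hw₁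
      obtain ⟨L₂, δ₂, hL₂, hδ₂, he₂⟩ := hw₂
      choose L hL htr using fun k => hjump k (L₁ k) (L₂ k) (hL₁ k) (hL₂ k)
      refine ⟨L, fun k => δ₁ k + δ₂ k, hL, fun k => ?_, ?_⟩
      · have := (hδ₁ k).mul (hδ₂ k)
        simpa [Matrix.det_mul] using this
      · have hs : ∑ k, (L k).trace = ∑ k, (L₁ k).trace + ∑ k, (L₂ k).trace := by
          rw [← Finset.sum_add_distrib]
          exact Finset.sum_congr rfl fun k _ => htr k
        push_cast
        rw [he₁, he₂, hs, Finset.sum_add_distrib]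
        ring
end
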